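/- The Cheeger constant of a finite weighted graph equals the minimum over all semi-metrics d on the vertex set that are nonnegative linear combinations of elementary cut semi-metrics, normalized so that Σ_u Σ_v d(u,v) = 1, of Σ_{edges uv} m(uv) d(u,v). -/

import Mathlib

open Finset Classical

variable {V : Type*} [Fintype V] [DecidableEq V]

/-- The elementary cut semi-metric attached to a cut `S`. -/
def cutDist (S : Finset V) (u v : V) : ℝ :=
  |(if u ∈ S then (1:ℝ) else 0) - (if v ∈ S then (1:ℝ) else 0)|

lemma cutDist_nonneg (S : Finset V) (u v : V) : 0 ≤ cutDist S u v := abs_nonneg _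

lemma cutDist_zero_of_trivial {S : Finset V} (h : ¬(S.Nonempty ∧ S ≠ Finset.univ))
    (u v : V) : cutDist S u v = 0 := by
  unfold cutDist
  rcases not_and_or.mp h with h | h
  · have hS : S = ∅ := Finset.not_nonempty_iff_eq_empty.mp h
    simp [hS]
  · have hS : S = Finset.univ := not_not.mp h
    simp [hS]

/-- The Cheeger constant of a finite weighted graph equals the minimum, over semi-metrics
`d` lying in the cut cone (nonnegative combinations of elementary cut semi-metrics)
normalized by `Σ_u Σ_v d(u,v) = 1`, of `Σ_{edges uv} m(uv) d(u,v)`. -/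
theorem cheeger_eq_min_over_cut_cone (G : SimpleGraph V) (m : V → V → ℝ)
    (hm : ∀ u v, m u v = m v u) (hm0 : ∀ u v, 0 ≤ m u v) (hV : Nontrivial V) :
    sInf {r : ℝ | ∃ S : Finset V, S.Nonempty ∧ S ≠ Finset.univ ∧
        r = (∑ u : V, ∑ v : V, (if G.Adj u v then m u v else 0) * cutDist S u v) /
            (∑ u : V, ∑ v : V, cutDist S u v)}
    = sInf {r : ℝ | ∃ d : V → V → ℝ,
        (∃ c : Finset V → ℝ, (∀ S, 0 ≤ c S) ∧
            ∀ u v, d u v = ∑ S : Finset V, c S * cutDist S u v) ∧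
        (∑ u : V, ∑ v : V, d u v) = 1 ∧
        r = ∑ u : V, ∑ v : V, (if G.Adj u v then m u v else 0) * d u v} := by
  classical
  set w : V → V → ℝ := fun u v => if G.Adj u v then m u v else 0 with hw
  have hw0 : ∀ u v, 0 ≤ w u v := by
    intro u v; by_cases h : G.Adj u v <;> simp [hw, h, hm0]
  set E : Finset V → ℝ := fun S => ∑ u : V, ∑ v : V, w u v * cutDist S u v with hE
  set T : Finset V → ℝ := fun S => ∑ u : V, ∑ v : V, cutDist S u v with hT
  set A := {r : ℝ | ∃ S : Finset V, S.Nonempty ∧ S ≠ Finset.univ ∧ r = E S / T S} with hA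
  set B := {r : ℝ | ∃ d : V → V → ℝ,
        (∃ c : Finset V → ℝ, (∀ S, 0 ≤ c S) ∧
            ∀ u v, d u v = ∑ S : Finset V, c S * cutDist S u v) ∧
        (∑ u : V, ∑ v : V, d u v) = 1 ∧
        r = ∑ u : V, ∑ v : V, w u v * d u v} with hB
  -- basic facts
  have hE0 : ∀ S, 0 ≤ E S := fun S =>
    Finset.sum_nonneg fun u _ => Finset.sum_nonneg fun v _ =>
      mul_nonneg (hw0 u v) (cutDist_nonneg S u v)
  have hT0 : ∀ S, 0 ≤ T S := fun S =>
    Finset.sum_nonneg fun u _ => Finset.sum_nonneg fun v _ => cutDist_nonneg S u v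
  have hTpos : ∀ S : Finset V, S.Nonempty → S ≠ Finset.univ → 0 < T S := by
    intro S hSne hSuniv
    obtain ⟨a, ha⟩ := hSne
    obtain ⟨b, hb⟩ : ∃ b, b ∉ S := by
      by_contra h
      push_neg at h
      exact hSuniv (Finset.eq_univ_iff_forall.mpr h)
    have h1 : cutDist S a b = 1 := by simp [cutDist, ha, hb]
    refine Finset.sum_pos' (fun u _ => Finset.sum_nonneg fun v _ => cutDist_nonneg S u v)
      ⟨a, Finset.mem_univ a, ?_⟩
    refine Finset.sum_pos' (fun v _ => cutDist_nonneg S a v) ⟨b, Finset.mem_univ b, ?_⟩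
    rw [h1]; norm_num
  -- A is nonempty
  obtain ⟨a, b, hab⟩ := hV
  have hAne : A.Nonempty := by
    refine ⟨E {a} / T {a}, {a}, Finset.singleton_nonempty a, ?_, rfl⟩
    intro h
    have : b ∈ ({a} : Finset V) := h ▸ Finset.mem_univ b
    exact hab (Finset.mem_singleton.mp this).symm
  have hAbdd : ∀ r ∈ A, (0:ℝ) ≤ r := by
    rintro r ⟨S, hS1, hS2, rfl⟩
    exact div_nonneg (hE0 S) (hT0 S)
  -- A ⊆ B
  have hAB : A ⊆ B := by
    rintro r ⟨S, hS1, hS2, rfl⟩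
    have hTS := hTpos S hS1 hS2
    refine ⟨fun u v => cutDist S u v / T S,
      ⟨fun S' => if S' = S then (T S)⁻¹ else 0, ?_, ?_⟩, ?_, ?_⟩
    · intro S'; dsimp only; split <;> positivity
    · intro u v
      rw [Finset.sum_eq_single S]
      · simp [div_eq_inv_mul]
      · intro S' _ hS'; simp [hS']
      · intro h; exact absurd (Finset.mem_univ S) h
    · simp_rw [← Finset.sum_div]
      exact div_self (ne_of_gt hTS)
    · simp_rw [← mul_div_assoc, ← Finset.sum_div]; rfl
  -- key: decompose sums over the cone
  have key : ∀ (c : Finset V → ℝ) (g : V → V → ℝ),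
      (∑ u : V, ∑ v : V, g u v * ∑ S : Finset V, c S * cutDist S u v)
        = ∑ S : Finset V, c S * ∑ u : V, ∑ v : V, g u v * cutDist S u v := by
    intro c g
    calc (∑ u : V, ∑ v : V, g u v * ∑ S : Finset V, c S * cutDist S u v)
        = ∑ u : V, ∑ v : V, ∑ S : Finset V, c S * (g u v * cutDist S u v) := by
          refine Finset.sum_congr rfl fun u _ => Finset.sum_congr rfl fun v _ => ?_
          rw [Finset.mul_sum]; exact Finset.sum_congr rfl fun S _ => by ring
      _ = ∑ u : V, ∑ S : Finset V, ∑ v : V, c S * (g u v * cutDist S u v) :=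
          Finset.sum_congr rfl fun u _ => Finset.sum_comm
      _ = ∑ S : Finset V, ∑ u : V, ∑ v : V, c S * (g u v * cutDist S u v) :=
          Finset.sum_comm
      _ = ∑ S : Finset V, c S * ∑ u : V, ∑ v : V, g u v * cutDist S u v := by
          refine Finset.sum_congr rfl fun S _ => ?_
          rw [Finset.mul_sum]
          exact Finset.sum_congr rfl fun u _ => (Finset.mul_sum _ _ _).symm
  set μ := sInf A with hμ
  have hμ_lbB : ∀ r ∈ B, μ ≤ r := by
    rintro r ⟨d, ⟨c, hc0, hcd⟩, hd1, rfl⟩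
    have hr : (∑ u : V, ∑ v : V, w u v * d u v) = ∑ S : Finset V, c S * E S := by
      simp_rw [hcd]; exact key c w
    have h1 : (1:ℝ) = ∑ S : Finset V, c S * T S := by
      rw [← hd1]
      simp_rw [hcd]
      have := key c (fun _ _ => 1)
      simpa using this
    have hET : ∀ S : Finset V, μ * T S ≤ E S := by
      intro S
      by_cases hS : S.Nonempty ∧ S ≠ Finset.univ
      · have hTS := hTpos S hS.1 hS.2
        have : μ ≤ E S / T S := csInf_le ⟨0, fun r hr => hAbdd r hr⟩ ⟨S, hS.1, hS.2, rfl⟩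
        exact (le_div_iff₀ hTS).mp this
      · have hz : ∀ u v, cutDist S u v = 0 := cutDist_zero_of_trivial hS
        have hE' : E S = 0 := by simp [hE, hz]
        have hT' : T S = 0 := by simp [hT, hz]
        rw [hE', hT', mul_zero]
    calc μ = μ * 1 := (mul_one μ).symm
      _ = ∑ S : Finset V, μ * (c S * T S) := by rw [h1, Finset.mul_sum]
      _ ≤ ∑ S : Finset V, c S * E S := by
          refine Finset.sum_le_sum fun S _ => ?_
          have := mul_le_mul_of_nonneg_left (hET S) (hc0 S)
          calc μ * (c S * T S) = c S * (μ * T S) := by ring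
            _ ≤ c S * E S := this
      _ = ∑ u : V, ∑ v : V, w u v * d u v := hr.symm
  have hBne : B.Nonempty := hAne.mono hAB
  refine le_antisymm (le_csInf hBne hμ_lbB) ?_
  exact csInf_le_csInf ⟨μ, hμ_lbB⟩ hAne hAB
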